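/- arXiv:2304.00811 — 2 statements merged into one kernel-verified Lean document; each statement's English description precedes it below -/
import Mathlib

section
/- Let $(\omega_j)_{j\in\mathbb{N}}$ be a sequence of nonnegative real numbers with $\sum_{j} \omega_j = \infty$. Then there exists a strictly increasing sequence $(j_n)_{n\in\mathbb{N}}$ of natural numbers such that $j_{n+1} - j_n \to \infty$ and $\sum_{n} \omega_{j_n} = \infty$. -/
open Filter Finset

lemma list_sum_map_range (f : ℕ → ℝ) (n : ℕ) :
    (((List.range n).map f)).sum = ∑ i ∈ Finset.range n, f i := by
  induction n with
  | zero => simp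
  | succ n ih => rw [List.range_succ, Finset.sum_range_succ]; simp [ih]

lemma sum_blocks (f : ℕ → ℝ) (M L : ℕ) :
    ∑ i ∈ Finset.range (M * L), f i = ∑ m ∈ Finset.range M, ∑ r ∈ Finset.range L, f (m * L + r) := by
  induction M with
  | zero => simp
  | succ M ih =>
    have h1 : ∑ i ∈ Finset.Ico (M*L) (M*L+L), f i = ∑ r ∈ Finset.range L, f (M*L + r) := by
      rw [Finset.sum_Ico_eq_sum_range]
      simp
    rw [Finset.sum_range_succ, ← ih, Nat.succ_mul, Finset.range_eq_Ico,
      ← Finset.sum_Ico_consecutive f (Nat.zero_le (M*L)) (Nat.le_add_right _ L), h1,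
      ← Finset.range_eq_Ico]

lemma sum_parity (f : ℕ → ℝ) (N : ℕ) :
    ∑ m ∈ Finset.range (2 * N), f m
      = ∑ t ∈ Finset.range N, f (2 * t) + ∑ t ∈ Finset.range N, f (2 * t + 1) := by
  induction N with
  | zero => simp
  | succ N ih =>
    have : 2 * (N + 1) = (2 * N) + 1 + 1 := by ring
    rw [this, Finset.sum_range_succ, Finset.sum_range_succ, ih,
      Finset.sum_range_succ, Finset.sum_range_succ]
    ring

lemma key (ω : ℕ → ℝ) (hpos : ∀ j, 0 ≤ ω j) (hdiv : ¬ Summable ω) (a L : ℕ) (hL : 1 ≤ L) :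
    ∃ x : List ℕ, x ≠ [] ∧ x.Chain' (fun p q => p + L ≤ q) ∧
      (∀ y ∈ x, a ≤ y) ∧ 1 ≤ ((x.map ω)).sum := by
  have htail : ¬ Summable (fun i => ω (i + a)) := fun h => hdiv ((summable_nat_add_iff a).mp h)
  have hmono := (not_summable_iff_tendsto_nat_atTop_of_nonneg (fun i => hpos _)).mp htail
  obtain ⟨N, hN⟩ := (hmono.eventually_ge_atTop (2 * L : ℕ)).exists
  -- hN : (2*L : ℝ) ≤ ∑ i ∈ range N, ω (i + a)
  have hN1 : 1 ≤ N := by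
    by_contra h
    have : N = 0 := by omega
    subst this
    simp only [Finset.range_zero, Finset.sum_empty] at hN
    have : (0:ℝ) < ((2*L : ℕ) : ℝ) := by exact_mod_cast Nat.pos_of_ne_zero (by omega)
    linarith
  -- argmax in each block
  have hc : ∀ m : ℕ, ∃ c : ℕ, (∃ r, r < L ∧ c = m * L + r + a) ∧
      ∀ r < L, ω (m * L + r + a) ≤ ω c := by
    intro m
    obtain ⟨r0, hr0, hmax⟩ := Finset.exists_max_image (Finset.range L)
      (fun r => ω (m * L + r + a)) ⟨0, Finset.mem_range.mpr hL⟩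
    exact ⟨m * L + r0 + a, ⟨r0, Finset.mem_range.mp hr0, rfl⟩,
      fun r hr => hmax r (Finset.mem_range.mpr hr)⟩
  choose c hc1 hc2 using hc
  have hbig : (2 : ℝ) ≤ ∑ m ∈ Finset.range (2 * N), ω (c m) := by
    have h1 : ∑ i ∈ Finset.range N, ω (i + a) ≤ ∑ i ∈ Finset.range (2 * N * L), ω (i + a) := by
      apply Finset.sum_le_sum_of_subset_of_nonneg
      · apply Finset.range_subset_range.mpr; nlinarith
      · intro i _ _; exact hpos _
    have h2 : ∑ i ∈ Finset.range (2 * N * L), ω (i + a)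
        = ∑ m ∈ Finset.range (2 * N), ∑ r ∈ Finset.range L, ω (m * L + r + a) := by
      rw [sum_blocks (fun i => ω (i + a)) (2 * N) L]
    have h3 : ∀ m, ∑ r ∈ Finset.range L, ω (m * L + r + a) ≤ (L : ℝ) * ω (c m) := by
      intro m
      calc ∑ r ∈ Finset.range L, ω (m * L + r + a)
          ≤ ∑ _r ∈ Finset.range L, ω (c m) :=
            Finset.sum_le_sum (fun r hr => hc2 m r (Finset.mem_range.mp hr))
        _ = (L : ℝ) * ω (c m) := by simp
    have h4 : ∑ i ∈ Finset.range N, ω (i + a) ≤ (L : ℝ) * ∑ m ∈ Finset.range (2 * N), ω (c m) := by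
      rw [Finset.mul_sum]
      exact le_trans h1 (h2 ▸ Finset.sum_le_sum (fun m _ => h3 m))
    have hLpos : (0:ℝ) < L := by exact_mod_cast hL
    have : (2 * L : ℝ) ≤ (L : ℝ) * ∑ m ∈ Finset.range (2 * N), ω (c m) := by
      refine le_trans ?_ h4
      exact_mod_cast hN
    nlinarith
  -- parity
  have hsplit := sum_parity (fun m => ω (c m)) N
  have hpar : ∃ e, e ≤ 1 ∧ (1:ℝ) ≤ ∑ t ∈ Finset.range N, ω (c (2 * t + e)) := by
    by_contra h
    push_neg at h
    have h0 := h 0 (by omega)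
    have h1 := h 1 le_rfl
    rw [hsplit] at hbig
    simp only [Nat.add_zero] at h0
    linarith
  obtain ⟨e, he1, he⟩ := hpar
  refine ⟨(List.range N).map (fun t => c (2 * t + e)), ?_, ?_, ?_, ?_⟩
  · simp only [ne_eq, List.map_eq_nil_iff, List.range_eq_nil]
    omega
  · rw [List.Chain', List.isChain_map]
    obtain ⟨N', rfl⟩ : ∃ N', N = N' + 1 := ⟨N - 1, by omega⟩
    rw [show (N' + 1) = Nat.succ N' from rfl, List.isChain_range_succ]
    intro m _
    obtain ⟨r, hr, hcr⟩ := hc1 (2 * m + e)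
    obtain ⟨r', hr', hcr'⟩ := hc1 (2 * Nat.succ m + e)
    rw [hcr, hcr']
    simp only [Nat.succ_eq_add_one] at hcr' ⊢
    have hexp : (2 * (m + 1) + e) * L = (2 * m + e) * L + 2 * L := by ring
    omega
  · intro y hy
    obtain ⟨t, _, rfl⟩ := List.mem_map.mp hy
    obtain ⟨r, hr, hcr⟩ := hc1 (2 * t + e)
    omega
  · rw [List.map_map, list_sum_map_range]
    exact he

noncomputable def BB (ω : ℕ → ℝ) (hpos : ∀ j, 0 ≤ ω j) (hdiv : ¬ Summable ω) : ℕ → List ℕ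
  | 0 => (key ω hpos hdiv 0 1 le_rfl).choose
  | n + 1 => (key ω hpos hdiv ((BB ω hpos hdiv n).getLastD 0 + (n + 2)) (n + 2)
      (by omega)).choose

section main
variable (ω : ℕ → ℝ) (hpos : ∀ j, 0 ≤ ω j) (hdiv : ¬ Summable ω)

lemma BB_ne (n : ℕ) : BB ω hpos hdiv n ≠ [] := by
  cases n with
  | zero => exact (key ω hpos hdiv 0 1 le_rfl).choose_spec.1
  | succ n => exact (key ω hpos hdiv _ (n + 2) (by omega)).choose_spec.1

lemma BB_chain (n : ℕ) :
    (BB ω hpos hdiv n).Chain' (fun p q => p + (n + 1) ≤ q) := by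
  cases n with
  | zero => exact (key ω hpos hdiv 0 1 le_rfl).choose_spec.2.1
  | succ n => exact (key ω hpos hdiv _ (n + 2) (by omega)).choose_spec.2.1

lemma BB_sum (n : ℕ) : 1 ≤ (((BB ω hpos hdiv n).map ω)).sum := by
  cases n with
  | zero => exact (key ω hpos hdiv 0 1 le_rfl).choose_spec.2.2.2
  | succ n => exact (key ω hpos hdiv _ (n + 2) (by omega)).choose_spec.2.2.2

lemma BB_lb (n : ℕ) :
    ∀ y ∈ BB ω hpos hdiv (n + 1), (BB ω hpos hdiv n).getLastD 0 + (n + 2) ≤ y :=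
  (key ω hpos hdiv _ (n + 2) (by omega)).choose_spec.2.2.1

noncomputable def Lc : ℕ → List ℕ
  | 0 => []
  | n + 1 => Lc n ++ BB ω hpos hdiv n

lemma Lc_len (n : ℕ) : n ≤ (Lc ω hpos hdiv n).length := by
  induction n with
  | zero => simp
  | succ n ih =>
    have := List.length_pos_iff.mpr (BB_ne ω hpos hdiv n)
    show n + 1 ≤ (Lc ω hpos hdiv n ++ BB ω hpos hdiv n).length
    rw [List.length_append]
    omega

lemma Lc_prefix {n m : ℕ} (h : n ≤ m) : Lc ω hpos hdiv n <+: Lc ω hpos hdiv m := by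
  induction m with
  | zero => rw [Nat.le_zero.mp h]
  | succ m ih =>
    rcases Nat.lt_or_ge n (m + 1) with h' | h'
    · exact (ih (by omega)).trans (List.prefix_append _ _)
    · rw [Nat.le_antisymm h h']

noncomputable def jj : ℕ → ℕ := fun k => (Lc ω hpos hdiv (k + 1)).getD k 0

lemma jj_eq {n k : ℕ} (hk : k < (Lc ω hpos hdiv n).length) :
    jj ω hpos hdiv k = (Lc ω hpos hdiv n).getD k 0 := by
  have hm : k < (Lc ω hpos hdiv (k + 1)).length := lt_of_lt_of_le (by omega) (Lc_len ω hpos hdiv _)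
  show (Lc ω hpos hdiv (k + 1)).getD k 0 = _
  rcases le_total n (k + 1) with h | h
  · have hpre := Lc_prefix ω hpos hdiv h
    rw [List.getD_eq_getElem _ _ hm, List.getD_eq_getElem _ _ hk]
    exact (hpre.getElem hk).symm
  · have hpre := Lc_prefix ω hpos hdiv h
    rw [List.getD_eq_getElem _ _ hm, List.getD_eq_getElem _ _ hk]
    exact hpre.getElem hm

noncomputable def CC (n : ℕ) : ℕ → List ℕ
  | 0 => []
  | m + 1 => if n ≤ m then CC n m ++ BB ω hpos hdiv m else []

lemma Lc_eq {n m : ℕ} (h : n ≤ m) :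
    Lc ω hpos hdiv m = Lc ω hpos hdiv n ++ CC ω hpos hdiv n m := by
  induction m with
  | zero =>
    rw [Nat.le_zero.mp h]
    simp [CC]
  | succ m ih =>
    rcases Nat.lt_or_ge m n with h' | h'
    · have : n = m + 1 := by omega
      subst this
      show _ = _ ++ (if m + 1 ≤ m then _ else [])
      rw [if_neg (by omega)]
      simp
    · show Lc ω hpos hdiv m ++ _ = _ ++ (if n ≤ m then _ else [])
      rw [if_pos h', ih h', List.append_assoc]

lemma CC_spec {n : ℕ} : ∀ {m : ℕ}, n ≤ m →
    (CC ω hpos hdiv n m).Chain' (fun p q => p + (n + 1) ≤ q) ∧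
    (∀ x ∈ (CC ω hpos hdiv n m).getLast?, ∃ m', m' + 1 = m ∧ x ∈ (BB ω hpos hdiv m').getLast?) := by
  intro m
  induction m with
  | zero => intro _; simp [CC, List.Chain']
  | succ m ih =>
    intro h
    rcases Nat.lt_or_ge m n with h' | h'
    · have hn : n = m + 1 := by omega
      subst hn
      have hCC : CC ω hpos hdiv (m + 1) (m + 1) = [] := by
        show (if m + 1 ≤ m then _ else []) = []
        rw [if_neg (by omega)]
      rw [hCC]
      constructor
      · exact List.isChain_nil
      · intro x hx
        simp at hx
    · obtain ⟨ihc, ihl⟩ := ih h'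
      have hCC : CC ω hpos hdiv n (m + 1) = CC ω hpos hdiv n m ++ BB ω hpos hdiv m := by
        show (if n ≤ m then _ else []) = _
        rw [if_pos h']
      rw [hCC]
      constructor
      · apply ihc.append ((BB_chain ω hpos hdiv m).imp (fun {p q} hpq => by omega))
        intro x hx y hy
        obtain ⟨m', hm', hx'⟩ := ihl x hx
        have hlast : (BB ω hpos hdiv m').getLastD 0 = x := by
          rw [List.getLastD_eq_getLast?, hx']
          rfl
        have hy' : y ∈ BB ω hpos hdiv m := List.mem_of_mem_head? hy
        subst hm'
        have h2 := BB_lb ω hpos hdiv m' y hy'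
        omega
      · intro x hx
        rw [List.getLast?_append_of_ne_nil _ (BB_ne ω hpos hdiv m)] at hx
        exact ⟨m, rfl, hx⟩

set_option maxHeartbeats 1000000 in
lemma jj_gap (n k : ℕ) (hk : (Lc ω hpos hdiv n).length ≤ k) :
    jj ω hpos hdiv k + (n + 1) ≤ jj ω hpos hdiv (k + 1) := by
  set m := k + 2 with hm
  have hnm : n ≤ m := le_trans (le_trans (Lc_len ω hpos hdiv n) hk) (by omega)
  have hlen : k + 2 ≤ (Lc ω hpos hdiv m).length := Lc_len ω hpos hdiv m
  have hEq := Lc_eq ω hpos hdiv hnm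
  set ln := (Lc ω hpos hdiv n).length with hln
  have hk1 : k < (Lc ω hpos hdiv m).length := by omega
  have hk2 : k + 1 < (Lc ω hpos hdiv m).length := by omega
  have e1 : jj ω hpos hdiv k = (CC ω hpos hdiv n m).getD (k - ln) 0 := by
    rw [jj_eq ω hpos hdiv hk1, hEq, List.getD_append_right _ _ _ _ (by omega)]
  have e2 : jj ω hpos hdiv (k + 1) = (CC ω hpos hdiv n m).getD (k + 1 - ln) 0 := by
    rw [jj_eq ω hpos hdiv hk2, hEq, List.getD_append_right _ _ _ _ (by omega)]
  have hclen : (Lc ω hpos hdiv m).length = ln + (CC ω hpos hdiv n m).length := by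
    rw [hEq, List.length_append]
  have hchain := (CC_spec ω hpos hdiv hnm).1
  rw [List.Chain', List.isChain_iff_getElem] at hchain
  have hi : (k - ln) + 1 < (CC ω hpos hdiv n m).length - 1 + 1 := by omega
  have := hchain (k - ln) (by omega)
  rw [e1, e2]
  have hgd1 : (CC ω hpos hdiv n m).getD (k - ln) 0
      = (CC ω hpos hdiv n m).get ⟨k - ln, by omega⟩ := by
    rw [List.getD_eq_getElem _ _ (by omega)]
    rfl
  have hgd2 : (CC ω hpos hdiv n m).getD (k + 1 - ln) 0
      = (CC ω hpos hdiv n m).get ⟨k - ln + 1, by omega⟩ := by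
    rw [List.getD_eq_getElem _ _ (by omega : k + 1 - ln < (CC ω hpos hdiv n m).length)]
    congr 1
    omega
  rw [hgd1, hgd2]
  exact this

end main

section main2
variable (ω : ℕ → ℝ) (hpos : ∀ j, 0 ≤ ω j) (hdiv : ¬ Summable ω)

lemma sum_getD (l : List ℕ) :
    ∑ k ∈ Finset.range l.length, ω (l.getD k 0) = ((l.map ω)).sum := by
  induction l with
  | nil => simp
  | cons a t ih =>
    rw [List.length_cons, Finset.sum_range_succ']
    simp only [List.getD_cons_succ, List.getD_cons_zero, List.map_cons, List.sum_cons, ih]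
    ring

lemma Lc_sum (n : ℕ) : (n : ℝ) ≤ (((Lc ω hpos hdiv n).map ω)).sum := by
  induction n with
  | zero => simp [Lc]
  | succ n ih =>
    have hstep : Lc ω hpos hdiv (n + 1) = Lc ω hpos hdiv n ++ BB ω hpos hdiv n := rfl
    rw [hstep, List.map_append, List.sum_append]
    have := BB_sum ω hpos hdiv n
    push_cast
    linarith

lemma jj_partial (n : ℕ) :
    (n : ℝ) ≤ ∑ k ∈ Finset.range (Lc ω hpos hdiv n).length, ω (jj ω hpos hdiv k) := by
  have he : ∑ k ∈ Finset.range (Lc ω hpos hdiv n).length, ω (jj ω hpos hdiv k)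
      = ∑ k ∈ Finset.range (Lc ω hpos hdiv n).length, ω ((Lc ω hpos hdiv n).getD k 0) := by
    apply Finset.sum_congr rfl
    intro k hk
    rw [jj_eq ω hpos hdiv (Finset.mem_range.mp hk)]
  rw [he, sum_getD]
  exact Lc_sum ω hpos hdiv n

end main2

theorem divergent_subseq_with_growing_gaps (ω : ℕ → ℝ) (hpos : ∀ j, 0 ≤ ω j)
    (hdiv : ¬ Summable ω) :
    ∃ j : ℕ → ℕ, StrictMono j ∧
      Tendsto (fun n => j (n + 1) - j n) atTop atTop ∧
      ¬ Summable (fun n => ω (j n)) := by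
  refine ⟨jj ω hpos hdiv, ?_, ?_, ?_⟩
  · apply strictMono_nat_of_lt_succ
    intro k
    have := jj_gap ω hpos hdiv 0 k (by simp [Lc])
    omega
  · rw [tendsto_atTop]
    intro b
    filter_upwards [eventually_ge_atTop (Lc ω hpos hdiv b).length] with k hk
    have := jj_gap ω hpos hdiv b k hk
    omega
  · intro hsum
    obtain ⟨n, hn⟩ := exists_nat_gt (∑' k, ω (jj ω hpos hdiv k))
    have h1 := jj_partial ω hpos hdiv n
    have h2 := Summable.sum_le_tsum (Finset.range (Lc ω hpos hdiv n).length)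
      (fun i _ => hpos _) hsum
    linarith
end

section
/- Let $f$ have wavelet coefficients $(c^i_{j,k})$ in a 1-smooth wavelet basis, let $H_{\min}(f) = \sup\{\alpha > 0 : f \in C^\alpha(\mathbb{T})\}$, and let $(\chi^i_{j,k})$ be I.I.D. random variables, each almost surely nonzero, with all moments finite and $\mathbb{P}(|\chi| \geq \delta) > 0$ for all sufficiently small $\delta > 0$. Then the randomized function $X_f$ with coefficients $c^i_{j,k}\chi^i_{j,k}$ satisfies $H_{\min}(X_f) = H_{\min}(f)$ almost surely. -/
open MeasureTheory ProbabilityTheory Filter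

/-- The uniform Hölder exponent of a function on the torus, expressed through the
wavelet characterization of the Hölder spaces `C^α`: `f ∈ C^α` iff its wavelet
coefficients satisfy `|c j k| ≤ C 2^(-α j)`. -/
noncomputable def Hmin (c : (j : ℕ) → Fin (2 ^ j) → ℝ) : ℝ :=
  sSup {α : ℝ | 0 < α ∧ ∃ C : ℝ, ∀ j k, |c j k| ≤ C * (2 : ℝ) ^ (-(α * j))}

def Sset (c : (j : ℕ) → Fin (2 ^ j) → ℝ) : Set ℝ :=
  {α : ℝ | 0 < α ∧ ∃ C : ℝ, ∀ j k, |c j k| ≤ C * (2 : ℝ) ^ (-(α * j))}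

lemma Sset_C_nonneg {c : (j : ℕ) → Fin (2 ^ j) → ℝ} {α C : ℝ}
    (h : ∀ j k, |c j k| ≤ C * (2 : ℝ) ^ (-(α * j))) : 0 ≤ C := by
  have h0 := h 0 0
  simp [Real.rpow_zero] at h0
  exact le_trans (abs_nonneg _) h0

lemma Sset_mono {c : (j : ℕ) → Fin (2 ^ j) → ℝ} {α β : ℝ}
    (hα : α ∈ Sset c) (hβ : 0 < β) (hle : β ≤ α) : β ∈ Sset c := by
  obtain ⟨hα0, C, hC⟩ := hα
  refine ⟨hβ, C, fun j k => ?_⟩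
  refine (hC j k).trans (mul_le_mul_of_nonneg_left ?_ (Sset_C_nonneg hC))
  apply Real.rpow_le_rpow_of_exponent_le one_le_two
  have : (0:ℝ) ≤ (j:ℝ) := Nat.cast_nonneg j
  nlinarith

lemma det_lemma (c d : (j : ℕ) → Fin (2 ^ j) → ℝ)
    (HA : ∀ ε : ℚ, 0 < ε → ∃ M : ℝ, 0 ≤ M ∧
      ∀ j k, |d j k| ≤ M * |c j k| * (2 : ℝ) ^ ((ε : ℝ) * j))
    (HB : ∀ β : ℚ, 0 < β → (¬ ∃ C : ℝ, ∀ j k, |c j k| ≤ C * (2 : ℝ) ^ (-((β : ℝ) * j))) →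
      ¬ ∃ C : ℝ, ∀ j k, |d j k| ≤ C * (2 : ℝ) ^ (-((β : ℝ) * j))) :
    sSup (Sset d) = sSup (Sset c) := by
  -- lower step
  have lower : ∀ α ∈ Sset c, ∀ ε : ℚ, 0 < ε → (ε : ℝ) < α → (α - ε) ∈ Sset d := by
    rintro α ⟨hα0, C, hC⟩ ε hε hεα
    obtain ⟨M, hM0, hM⟩ := HA ε hε
    refine ⟨by linarith, M * C, fun j k => ?_⟩
    have h1 : |d j k| ≤ M * |c j k| * (2 : ℝ) ^ ((ε : ℝ) * j) := hM j k
    have h2 : M * |c j k| * (2 : ℝ) ^ ((ε : ℝ) * j)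
        ≤ M * (C * (2 : ℝ) ^ (-(α * j))) * (2 : ℝ) ^ ((ε : ℝ) * j) := by
      have hp : (0:ℝ) ≤ (2 : ℝ) ^ ((ε : ℝ) * j) := (Real.rpow_pos_of_pos two_pos _).le
      exact mul_le_mul_of_nonneg_right (mul_le_mul_of_nonneg_left (hC j k) hM0) hp
    refine h1.trans (h2.trans (le_of_eq ?_))
    rw [mul_assoc, mul_assoc, ← Real.rpow_add two_pos]
    ring_nf
  -- upper step
  have upper : ∀ β : ℚ, 0 < β → ((β : ℝ) ∉ Sset c) → ∀ γ ∈ Sset d, γ < (β : ℝ) := by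
    intro β hβ hβc γ hγ
    by_contra hle
    push_neg at hle
    have hβ0 : (0:ℝ) < (β : ℝ) := by exact_mod_cast hβ
    have hcn : ¬ ∃ C : ℝ, ∀ j k, |c j k| ≤ C * (2 : ℝ) ^ (-((β : ℝ) * j)) := by
      intro hC
      exact hβc ⟨hβ0, hC⟩
    have hdn := HB β hβ hcn
    have : (β : ℝ) ∈ Sset d := Sset_mono hγ hβ0 hle
    exact hdn this.2
  -- cases
  by_cases hne : (Sset c).Nonempty
  · by_cases hbdd : BddAbove (Sset c)
    · -- main case
      obtain ⟨α₀, hα₀⟩ := id hne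
      have hsup_pos : 0 < sSup (Sset c) := lt_of_lt_of_le hα₀.1 (le_csSup hbdd hα₀)
      obtain ⟨β₀, hβ₀1, hβ₀2⟩ := exists_rat_btwn (lt_add_one (sSup (Sset c)))
      have hβ₀c : (β₀ : ℝ) ∉ Sset c := fun h => absurd (le_csSup hbdd h) (not_le.2 hβ₀1)
      have hβ₀pos : (0:ℚ) < β₀ := by
        have : (0:ℝ) < (β₀:ℝ) := lt_trans hsup_pos hβ₀1
        exact_mod_cast this
      have hbddd : BddAbove (Sset d) :=
        ⟨(β₀ : ℝ), fun γ hγ => (upper β₀ hβ₀pos hβ₀c γ hγ).le⟩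
      -- ≥
      have hge : sSup (Sset c) ≤ sSup (Sset d) := by
        apply csSup_le hne
        intro α hα
        by_contra hlt
        push_neg at hlt
        have hpos : 0 < α - sSup (Sset d) := by linarith
        obtain ⟨ε, hε1, hε2⟩ := exists_rat_btwn (lt_min hpos hα.1)
        have hε0 : (0:ℚ) < ε := by exact_mod_cast hε1
        have hεα : (ε : ℝ) < α := lt_of_lt_of_le hε2 (min_le_right _ _)
        have hmem := lower α hα ε hε0 hεα
        have := le_csSup hbddd hmem
        have : α - ε ≤ sSup (Sset d) := this
        have h2 : (ε : ℝ) < α - sSup (Sset d) := lt_of_lt_of_le hε2 (min_le_left _ _)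
        linarith
      -- ≤
      have hle : sSup (Sset d) ≤ sSup (Sset c) := by
        by_cases hned : (Sset d).Nonempty
        · by_contra hlt
          push_neg at hlt
          obtain ⟨β, hβ1, hβ2⟩ := exists_rat_btwn hlt
          have hβc : (β : ℝ) ∉ Sset c := fun h => absurd (le_csSup hbdd h) (not_le.2 hβ1)
          have hβpos : (0:ℚ) < β := by
            have : (0:ℝ) < (β:ℝ) := lt_trans hsup_pos hβ1
            exact_mod_cast this
          have : sSup (Sset d) ≤ (β : ℝ) :=
            csSup_le hned (fun γ hγ => (upper β hβpos hβc γ hγ).le)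
          linarith
        · rw [Set.not_nonempty_iff_eq_empty.1 hned, Real.sSup_empty]
          exact hsup_pos.le
      linarith
    · -- unbounded case
      rw [Real.sSup_of_not_bddAbove hbdd]
      have hbddd : ¬ BddAbove (Sset d) := by
        intro ⟨b, hb⟩
        obtain ⟨α, hα, hαb⟩ := not_bddAbove_iff.1 hbdd (max b 0 + 1)
        have h1α : (1:ℝ) < α := by
          have := le_max_right b 0; linarith
        have hmem := lower α hα 1 one_pos (by push_cast; linarith)
        have := hb hmem
        have := le_max_left b 0
        push_cast at hmem ⊢
        have h3 : α - 1 ≤ b := hb hmem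
        have := le_max_left b 0
        linarith [le_max_left b 0]
      rw [Real.sSup_of_not_bddAbove hbddd]
  · -- empty case
    have hce : Sset c = ∅ := Set.not_nonempty_iff_eq_empty.1 hne
    have hde : Sset d = ∅ := by
      rw [Set.eq_empty_iff_forall_notMem]
      intro γ hγ
      obtain ⟨β, hβ1, hβ2⟩ := exists_rat_btwn hγ.1
      have hβpos : (0:ℚ) < β := by exact_mod_cast hβ1
      have hβc : (β : ℝ) ∉ Sset c := by rw [hce]; exact Set.notMem_empty _
      exact absurd (upper β hβpos hβc γ hγ) (not_lt.2 hβ2.le)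
    rw [hce, hde]

section PartA

variable {Ω : Type*} [MeasurableSpace Ω] (μ : Measure Ω) [IsProbabilityMeasure μ]

lemma partA (χ : (Σ j : ℕ, Fin (2 ^ j)) → Ω → ℝ)
    (hident : ∀ p, IdentDistrib (χ p) (χ ⟨0, 0⟩) μ μ)
    (hfast : ∀ l : ℝ, 0 < l → ∃ C : ℝ, 0 < C ∧ ∀ x : ℝ, 0 < x →
      μ {ω | x ≤ |χ ⟨0, 0⟩ ω|} ≤ ENNReal.ofReal (C / x ^ l))
    (ε : ℚ) (hε : 0 < ε) :
    ∀ᵐ ω ∂μ, ∀ᶠ j in atTop, ∀ k : Fin (2 ^ j), |χ ⟨j, k⟩ ω| < (2 : ℝ) ^ ((ε : ℝ) * j) := by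
  have hε' : (0 : ℝ) < (ε : ℝ) := by exact_mod_cast hε
  obtain ⟨C, hC, hfC⟩ := hfast (2 / ε) (by positivity)
  set s : ℕ → Set Ω := fun j => ⋃ k : Fin (2 ^ j),
    χ ⟨j, k⟩ ⁻¹' {x : ℝ | (2 : ℝ) ^ ((ε : ℝ) * j) ≤ |x|} with hs
  have hTmeas : ∀ j : ℕ, MeasurableSet {x : ℝ | (2 : ℝ) ^ ((ε : ℝ) * j) ≤ |x|} := fun j =>
    (isClosed_le continuous_const continuous_abs).measurableSet
  have hbound : ∀ j : ℕ, μ (s j) ≤ ENNReal.ofReal (C * (2⁻¹ : ℝ) ^ j) := by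
    intro j
    have hpow : (0 : ℝ) < (2 : ℝ) ^ ((ε : ℝ) * j) := Real.rpow_pos_of_pos two_pos _
    have hone : μ (χ ⟨(0:ℕ), (0 : Fin (2^0))⟩ ⁻¹' {x : ℝ | (2 : ℝ) ^ ((ε : ℝ) * j) ≤ |x|})
        ≤ ENNReal.ofReal (C / ((2 : ℝ) ^ ((ε : ℝ) * j)) ^ ((2 : ℝ) / ε)) := by
      exact hfC _ hpow
    have hexp : ((2 : ℝ) ^ ((ε : ℝ) * j)) ^ ((2 : ℝ) / ε) = (4 : ℝ) ^ j := by
      rw [← Real.rpow_mul (by norm_num : (0:ℝ) ≤ 2)]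
      have : (ε : ℝ) * j * (2 / ε) = ((2 * j : ℕ) : ℝ) := by
        push_cast; field_simp
      rw [this, Real.rpow_natCast, pow_mul]
      norm_num
    have hterm : ∀ k : Fin (2 ^ j),
        μ (χ ⟨j, k⟩ ⁻¹' {x : ℝ | (2 : ℝ) ^ ((ε : ℝ) * j) ≤ |x|})
          ≤ ENNReal.ofReal (C / (4 : ℝ) ^ j) := by
      intro k
      rw [(hident ⟨j, k⟩).measure_mem_eq (hTmeas j)]
      rw [hexp] at hone
      exact hone
    calc μ (s j) ≤ ∑' k : Fin (2 ^ j),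
          μ (χ ⟨j, k⟩ ⁻¹' {x : ℝ | (2 : ℝ) ^ ((ε : ℝ) * j) ≤ |x|}) := measure_iUnion_le _
      _ ≤ ∑' _ : Fin (2 ^ j), ENNReal.ofReal (C / (4 : ℝ) ^ j) :=
          ENNReal.tsum_le_tsum hterm
      _ = (2 ^ j : ℕ) * ENNReal.ofReal (C / (4 : ℝ) ^ j) := by
          rw [tsum_fintype]
          simp [Finset.sum_const, Finset.card_univ, nsmul_eq_mul]
      _ = ENNReal.ofReal ((2 : ℝ) ^ j * (C / (4 : ℝ) ^ j)) := by
          rw [ENNReal.ofReal_mul (by positivity)]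
          congr 1
          rw [ENNReal.ofReal_pow (by norm_num)]
          norm_num
      _ = ENNReal.ofReal (C * (2⁻¹ : ℝ) ^ j) := by
          congr 1
          have h4 : (4:ℝ)^j = 2^j * 2^j := by
            rw [show (4:ℝ) = 2*2 by norm_num, mul_pow]
          have h2 : ((2:ℝ)^j) ≠ 0 := by positivity
          field_simp [h4]
          rw [h4, one_div, inv_pow, mul_inv_cancel_right₀ h2]
  have hsum : (∑' j, μ (s j)) ≠ ⊤ := by
    apply ne_top_of_le_ne_top _ (ENNReal.tsum_le_tsum hbound)
    rw [← ENNReal.ofReal_tsum_of_nonneg (fun j => by positivity)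
      ((summable_geometric_of_lt_one (by norm_num) (by norm_num)).mul_left C)]
    exact ENNReal.ofReal_ne_top
  filter_upwards [ae_eventually_notMem hsum] with ω hω
  filter_upwards [hω] with j hj k
  by_contra hcon
  push_neg at hcon
  exact hj (Set.mem_iUnion.2 ⟨k, hcon⟩)

end PartA

section PartB

noncomputable def seqAux {ι : Type*} (v : ι → ℝ) (hh : ∀ C : ℝ, ∃ p, C < v p) : ℕ → ι
  | 0 => (hh 1).choose
  | n + 1 => (hh (max (v (seqAux v hh n)) (n + 1))).choose

lemma seqAux_lt {ι : Type*} (v : ι → ℝ) (hh : ∀ C : ℝ, ∃ p, C < v p) (n : ℕ) :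
    (n : ℝ) < v (seqAux v hh n) := by
  cases n with
  | zero => rw [seqAux]; exact lt_trans (by norm_num) (hh 1).choose_spec
  | succ n =>
    have h := (hh (max (v (seqAux v hh n)) (n + 1))).choose_spec
    have := le_max_right (v (seqAux v hh n)) ((n : ℝ) + 1)
    push_cast
    exact lt_of_le_of_lt this h

lemma seqAux_strictMono {ι : Type*} (v : ι → ℝ) (hh : ∀ C : ℝ, ∃ p, C < v p) :
    StrictMono (v ∘ seqAux v hh) := by
  apply strictMono_nat_of_lt_succ
  intro n
  have h := (hh (max (v (seqAux v hh n)) (n + 1))).choose_spec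
  exact lt_of_le_of_lt (le_max_left _ _) h

lemma seqAux_injective {ι : Type*} (v : ι → ℝ) (hh : ∀ C : ℝ, ∃ p, C < v p) :
    Function.Injective (seqAux v hh) :=
  fun a b h => (seqAux_strictMono v hh).injective (congrArg v h)

variable {Ω : Type*} [MeasurableSpace Ω] (μ : Measure Ω) [IsProbabilityMeasure μ]

lemma partB (χ : (Σ j : ℕ, Fin (2 ^ j)) → Ω → ℝ)
    (hmeas : ∀ p, Measurable (χ p))
    (hind : iIndepFun χ μ)
    (hident : ∀ p, IdentDistrib (χ p) (χ ⟨0, 0⟩) μ μ)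
    (c : (j : ℕ) → Fin (2 ^ j) → ℝ) (δ : ℝ) (hδpos : 0 < δ)
    (hq : 0 < μ {ω | δ ≤ |χ ⟨0, 0⟩ ω|}) (β : ℚ)
    (hc : ¬ ∃ C : ℝ, ∀ j k, |c j k| ≤ C * (2 : ℝ) ^ (-((β : ℝ) * j))) :
    ∀ᵐ ω ∂μ, ¬ ∃ C : ℝ, ∀ j k, |c j k * χ ⟨j, k⟩ ω| ≤ C * (2 : ℝ) ^ (-((β : ℝ) * j)) := by
  classical
  set v : (Σ j : ℕ, Fin (2 ^ j)) → ℝ :=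
    fun p => |c p.1 p.2| * (2 : ℝ) ^ ((β : ℝ) * p.1) with hv
  have hh : ∀ C : ℝ, ∃ p, C < v p := by
    intro C
    push_neg at hc
    obtain ⟨j, k, hjk⟩ := hc C
    refine ⟨⟨j, k⟩, ?_⟩
    have hpow : (0 : ℝ) < (2 : ℝ) ^ ((β : ℝ) * j) := Real.rpow_pos_of_pos two_pos _
    rw [Real.rpow_neg (by norm_num : (0:ℝ) ≤ 2), ← div_eq_mul_inv] at hjk
    exact (div_lt_iff₀ hpow).1 hjk
  set g := seqAux v hh with hg
  set T : Set ℝ := {x : ℝ | δ ≤ |x|} with hT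
  have hTmeas : MeasurableSet T := (isClosed_le continuous_const continuous_abs).measurableSet
  set s : ℕ → Set Ω := fun n => χ (g n) ⁻¹' T with hsdef
  have hsm : ∀ n, MeasurableSet (s n) := fun n => hmeas (g n) hTmeas
  have hμs : ∀ n, μ (s n) = μ {ω | δ ≤ |χ ⟨0, 0⟩ ω|} := by
    intro n
    have := (hident (g n)).measure_mem_eq hTmeas
    simpa [hsdef, hT, Set.preimage_setOf_eq] using this
  have hindep : iIndepSet s μ := by
    rw [iIndepSet_iff_meas_biInter hsm]
    intro t
    have hmul := hind.measure_inter_preimage_eq_mul (S := t.image g)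
      (sets := fun _ => T) (fun i _ => hTmeas)
    rw [Finset.set_biInter_finset_image,
      Finset.prod_image (fun x _ y _ h => seqAux_injective v hh h)] at hmul
    exact hmul
  have htop : (∑' n, μ (s n)) = ⊤ := by
    simp_rw [hμs]
    exact ENNReal.tsum_const_eq_top_of_ne_zero hq.ne'
  have hone := measure_limsup_eq_one hsm hindep htop
  have hco : μ (limsup s atTop)ᶜ = 0 := by
    rw [measure_compl (MeasurableSet.measurableSet_limsup hsm) (measure_ne_top _ _), hone,
      measure_univ, tsub_self]
  have hae : ∀ᵐ ω ∂μ, ω ∈ limsup s atTop := by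
    rw [ae_iff]
    exact hco
  filter_upwards [hae] with ω hω
  rintro ⟨C, hCb⟩
  rw [mem_limsup_iff_frequently_mem] at hω
  obtain ⟨n, hn, hmem⟩ := (frequently_atTop.1 hω) (Nat.ceil (C / δ) + 1)
  have hδχ : δ ≤ |χ (g n) ω| := hmem
  have hvlt : (n : ℝ) < v (g n) := seqAux_lt v hh n
  have hCk := hCb (g n).1 (g n).2
  have hpow : (0:ℝ) < (2:ℝ) ^ ((β:ℝ) * ((g n).1 : ℕ)) := Real.rpow_pos_of_pos two_pos _
  rw [abs_mul, Real.rpow_neg (by norm_num : (0:ℝ) ≤ 2), ← div_eq_mul_inv] at hCk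
  have h2 : |c (g n).1 (g n).2| * δ ≤ C / (2:ℝ) ^ ((β:ℝ) * ((g n).1 : ℕ)) := by
    refine le_trans ?_ hCk
    exact mul_le_mul_of_nonneg_left hδχ (abs_nonneg _)
  have h3 : δ * v (g n) ≤ C := by
    have h5 := (le_div_iff₀ hpow).1 h2
    simp only [hv]
    nlinarith [h5]
  have h4 : C / δ < v (g n) := by
    have hceil : C / δ ≤ (Nat.ceil (C/δ) : ℝ) := Nat.le_ceil _
    have hn' : ((Nat.ceil (C/δ) + 1 : ℕ) : ℝ) ≤ (n : ℝ) := by exact_mod_cast hn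
    push_cast at hn'
    linarith
  have h6 : C < v (g n) * δ := (div_lt_iff₀ hδpos).1 h4
  linarith

end PartB

theorem uniform_holder_exponent_invariant
    {Ω : Type*} [MeasurableSpace Ω] (μ : Measure Ω) [IsProbabilityMeasure μ]
    (c : (j : ℕ) → Fin (2 ^ j) → ℝ)
    (χ : (Σ j : ℕ, Fin (2 ^ j)) → Ω → ℝ)
    (hmeas : ∀ p, Measurable (χ p))
    (hind : iIndepFun χ μ)
    (hident : ∀ p, IdentDistrib (χ p) (χ ⟨0, 0⟩) μ μ)
    (hnonzero : ∀ p, μ {ω | χ p ω = 0} = 0)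
    (hfast : ∀ l : ℝ, 0 < l → ∃ C : ℝ, 0 < C ∧ ∀ x : ℝ, 0 < x →
      μ {ω | x ≤ |χ ⟨0, 0⟩ ω|} ≤ ENNReal.ofReal (C / x ^ l))
    (hpos : ∃ δ₀ : ℝ, 0 < δ₀ ∧ ∀ δ : ℝ, 0 < δ → δ < δ₀ → 0 < μ {ω | δ ≤ |χ ⟨0, 0⟩ ω|}) :
    ∀ᵐ ω ∂μ, Hmin (fun j k => c j k * χ ⟨j, k⟩ ω) = Hmin c := by
  classical
  obtain ⟨δ₀, hδ₀pos, hδ⟩ := hpos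
  have hq : 0 < μ {ω | δ₀ / 2 ≤ |χ ⟨0, 0⟩ ω|} :=
    hδ _ (half_pos hδ₀pos) (half_lt_self hδ₀pos)
  have hA : ∀ᵐ ω ∂μ, ∀ ε : ℚ, 0 < ε →
      ∀ᶠ j in atTop, ∀ k : Fin (2 ^ j), |χ ⟨j, k⟩ ω| < (2 : ℝ) ^ ((ε : ℝ) * j) := by
    rw [ae_all_iff]
    intro ε
    by_cases hε : 0 < ε
    · filter_upwards [partA μ χ hident hfast ε hε] with ω h _
      exact h
    · exact ae_of_all _ fun ω h => absurd h hε
  have hB : ∀ᵐ ω ∂μ, ∀ β : ℚ,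
      (¬ ∃ C : ℝ, ∀ j k, |c j k| ≤ C * (2 : ℝ) ^ (-((β : ℝ) * j))) →
      ¬ ∃ C : ℝ, ∀ j k, |c j k * χ ⟨j, k⟩ ω| ≤ C * (2 : ℝ) ^ (-((β : ℝ) * j)) := by
    rw [ae_all_iff]
    intro β
    by_cases hcb : ∃ C : ℝ, ∀ j k, |c j k| ≤ C * (2 : ℝ) ^ (-((β : ℝ) * j))
    · exact ae_of_all _ fun ω h => absurd hcb h
    · filter_upwards [partB μ χ hmeas hind hident c (δ₀ / 2) (half_pos hδ₀pos) hq β hcb]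
        with ω h _
      exact h
  filter_upwards [hA, hB] with ω hAω hBω
  show sSup (Sset _) = sSup (Sset c)
  apply det_lemma
  · -- HA
    intro ε hε
    obtain ⟨J, hJ⟩ := eventually_atTop.1 (hAω ε hε)
    set M : ℝ := 1 + ∑ j ∈ Finset.range J, ∑ k : Fin (2 ^ j), |χ ⟨j, k⟩ ω| with hM
    have hM1 : (1 : ℝ) ≤ M := by
      have : (0:ℝ) ≤ ∑ j ∈ Finset.range J, ∑ k : Fin (2 ^ j), |χ ⟨j, k⟩ ω| :=
        Finset.sum_nonneg fun _ _ => Finset.sum_nonneg fun _ _ => abs_nonneg _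
      linarith
    refine ⟨M, by linarith, fun j k => ?_⟩
    have hPpos : (0:ℝ) < (2 : ℝ) ^ ((ε : ℝ) * j) := Real.rpow_pos_of_pos two_pos _
    rw [abs_mul]
    by_cases hj : J ≤ j
    · have hχ : |χ ⟨j, k⟩ ω| ≤ (2 : ℝ) ^ ((ε : ℝ) * j) := (hJ j hj k).le
      have h1 : |c j k| * |χ ⟨j, k⟩ ω| ≤ |c j k| * (2 : ℝ) ^ ((ε : ℝ) * j) :=
        mul_le_mul_of_nonneg_left hχ (abs_nonneg _)
      have h2 : |c j k| * (2 : ℝ) ^ ((ε : ℝ) * j) ≤ M * |c j k| * (2 : ℝ) ^ ((ε : ℝ) * j) := by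
        nlinarith [mul_nonneg (mul_nonneg (sub_nonneg.2 hM1) (abs_nonneg (c j k))) hPpos.le]
      linarith
    · push_neg at hj
      have hχM : |χ ⟨j, k⟩ ω| ≤ M := by
        have h1 : |χ ⟨j, k⟩ ω| ≤ ∑ k' : Fin (2 ^ j), |χ ⟨j, k'⟩ ω| :=
          Finset.single_le_sum (f := fun k' : Fin (2 ^ j) => |χ ⟨j, k'⟩ ω|) (fun _ _ => abs_nonneg _) (Finset.mem_univ k)
        have h2 : ∑ k' : Fin (2 ^ j), |χ ⟨j, k'⟩ ω|
            ≤ ∑ j' ∈ Finset.range J, ∑ k' : Fin (2 ^ j'), |χ ⟨j', k'⟩ ω| :=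
          Finset.single_le_sum (f := fun j' => ∑ k' : Fin (2 ^ j'), |χ ⟨j', k'⟩ ω|)
            (fun _ _ => Finset.sum_nonneg fun _ _ => abs_nonneg _) (Finset.mem_range.2 hj)
        linarith
      have hP1 : (1 : ℝ) ≤ (2 : ℝ) ^ ((ε : ℝ) * j) := by
        rw [show (1:ℝ) = (2:ℝ) ^ (0:ℝ) from (Real.rpow_zero 2).symm]
        exact Real.rpow_le_rpow_of_exponent_le one_le_two
          (by positivity)
      have h1 : |c j k| * |χ ⟨j, k⟩ ω| ≤ |c j k| * M :=
        mul_le_mul_of_nonneg_left hχM (abs_nonneg _)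
      have h2 : |c j k| * M ≤ M * |c j k| * (2 : ℝ) ^ ((ε : ℝ) * j) := by
        nlinarith [mul_nonneg (mul_nonneg (le_trans zero_le_one hM1) (abs_nonneg (c j k)))
          (sub_nonneg.2 hP1)]
      linarith
  · -- HB
    exact fun β _ => hBω β
end
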